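/- For a marked graph G with a vertex v that is unlooped and marked c (or looped and marked cr), the bracket satisfies [G] = A[G − v] + B[G_cru^v − v]. If instead v is looped and marked c (or unlooped and marked cr), then [G] = B[G − v] + A[G_cru^v − v]. -/

import Mathlib

/-- The six vertex marks of a multiply marked graph. -/
inductive Mark : Type
  | un | r | c | cr | u | ur
deriving DecidableEq

/-- A (multiply marked) graph: symmetric irreflexive adjacency, loops,
marks, and a number of free loops. -/
structure MGraph (V : Type) [DecidableEq V] : Type where
  adj : V → V → Bool
  adj_symm : ∀ x y, adj x y = adj y x
  adj_irrefl : ∀ x, adj x x = false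
  loop : V → Bool
  mark : V → Mark
  freeLoops : ℕ

namespace MGraph

variable {V : Type} [DecidableEq V]

/-- The mark change at `v` itself: unmarked↔u, r↔ur, c↔cr. -/
def flipV : Mark → Mark
  | .un => .u | .u => .un | .r => .ur | .ur => .r | .c => .cr | .cr => .c

/-- The mark change at neighbors of `v`: unmarked↔r, c↔ur, u↔cr. -/
def flipN : Mark → Mark
  | .un => .r | .r => .un | .c => .ur | .ur => .c | .u => .cr | .cr => .u

/-- The marked local complement `G_cru^v`. -/
def mlc (G : MGraph V) (v : V) : MGraph V where
  adj x y := if x ≠ y ∧ G.adj v x = true ∧ G.adj v y = true then !(G.adj x y) else G.adj x y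
  adj_symm := by
    intro x y
    try dsimp only
    by_cases h : x ≠ y ∧ G.adj v x = true ∧ G.adj v y = true
    · rw [if_pos h, if_pos ⟨h.1.symm, h.2.2, h.2.1⟩, G.adj_symm]
    · rw [if_neg h, if_neg (fun h' => h ⟨h'.1.symm, h'.2.2, h'.2.1⟩), G.adj_symm]
  adj_irrefl := by
    intro x
    try dsimp only
    rw [if_neg (fun h => h.1 rfl), G.adj_irrefl]
  loop := G.loop
  mark x := if x = v then flipV (G.mark x)
            else if G.adj v x = true then flipN (G.mark x) else G.mark x
  freeLoops := G.freeLoops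

end MGraph

/-- Whether a mark contains the letter `r`. -/
def Mark.hasR : Mark → Bool
  | .r => true | .cr => true | .ur => true | _ => false

/-- Whether a mark is `c` or `cr`. -/
def Mark.isC : Mark → Bool
  | .c => true | .cr => true | _ => false

/-- Whether a mark is `u` or `ur`. -/
def Mark.isU : Mark → Bool
  | .u => true | .ur => true | _ => false

/-- GF(2)-nullity of a square matrix. -/
noncomputable def nullity {n : Type} [Fintype n] (M : Matrix n n (ZMod 2)) : ℕ :=
  Fintype.card n - M.rank

namespace MGraph

variable {V : Type} [DecidableEq V]

/-- The matrix `𝒜(G) + Δ_T` over GF(2): off-diagonal entries record adjacency,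
and the diagonal entry at `x` is the loop contribution plus the `Δ_T` entry,
which is `1` iff (`x ∈ T` and the mark of `x` has no `r`) or (`x ∉ T` and it has an `r`). -/
def matT (G : MGraph V) (T : Finset V) : Matrix V V (ZMod 2) :=
  Matrix.of fun x y =>
    if x = y then
      (if G.loop x = true then 1 else 0) +
        (if ((x ∈ T) ↔ (G.mark x).hasR = false) then 1 else 0)
    else if G.adj x y = true then 1 else 0

/-- The vertices whose rows and columns are kept in `𝒜(G)_T`: delete `x` iff
`x` is marked `c`/`cr` with diagonal entry `0`, or marked `u`/`ur` with diagonal entry `1`. -/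
def keep (G : MGraph V) (T : Finset V) (x : V) : Bool :=
  !(((G.mark x).isC && decide (G.matT T x x = 0)) ||
    ((G.mark x).isU && decide (G.matT T x x = 1)))

/-- The matrix `𝒜(G)_T`, the submatrix of `𝒜(G) + Δ_T` on the kept vertices. -/
def subMat (G : MGraph V) (T : Finset V) :
    Matrix {x : V // G.keep T x = true} {x : V // G.keep T x = true} (ZMod 2) :=
  (G.matT T).submatrix Subtype.val Subtype.val

/-- The marked-graph bracket polynomial, evaluated at elements `A`, `B`, `d`
of a commutative ring. -/
noncomputable def bracket (G : MGraph V) [Fintype V] {R : Type*} [CommRing R]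
    (A B d : R) : R :=
  d ^ G.freeLoops *
    ∑ T : Finset V, A ^ (Fintype.card V - T.card) * B ^ T.card * d ^ nullity (G.subMat T)

/-- The weighted marked-graph bracket polynomial with vertex weights `α`, `β`. -/
noncomputable def wbracket (G : MGraph V) [Fintype V] {R : Type*} [CommRing R]
    (d : R) (α β : V → R) : R :=
  d ^ G.freeLoops *
    ∑ T : Finset V, (∏ x ∈ Tᶜ, α x) * (∏ x ∈ T, β x) * d ^ nullity (G.subMat T)

/-- Deletion of the vertex `v`. -/
def delete (G : MGraph V) (v : V) : MGraph {x : V // x ≠ v} where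
  adj x y := G.adj x.val y.val
  adj_symm := fun x y => G.adj_symm x.val y.val
  adj_irrefl := fun x => G.adj_irrefl x.val
  loop x := G.loop x.val
  mark x := G.mark x.val
  freeLoops := G.freeLoops

/-- Change the mark of the vertex `v` to `m`. -/
def setMark (G : MGraph V) (v : V) (m : Mark) : MGraph V :=
  { G with mark := fun x => if x = v then m else G.mark x }

/-- The one-vertex graph with given loop status and mark (and no free loops). -/
def single (l : Bool) (m : Mark) : MGraph Unit where
  adj _ _ := false
  adj_symm := fun _ _ => rfl
  adj_irrefl := fun _ => rfl
  loop _ := l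
  mark _ := m
  freeLoops := 0

end MGraph

open Matrix in
lemma nullity_eq_finrank_ker {n : Type} [Fintype n] [DecidableEq n]
    (M : Matrix n n (ZMod 2)) :
    nullity M = Module.finrank (ZMod 2) (LinearMap.ker M.mulVecLin) := by
  have h := LinearMap.finrank_range_add_finrank_ker M.mulVecLin
  rw [Module.finrank_pi] at h
  unfold nullity Matrix.rank
  omega

open Matrix in
lemma nullity_submatrix {m n : Type} [Fintype m] [Fintype n] [DecidableEq n]
    (M : Matrix n n (ZMod 2)) (e : m ≃ n) :
    nullity (M.submatrix e e) = nullity M := by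
  unfold nullity
  rw [Matrix.rank_submatrix, Fintype.card_congr e]

lemma sum_split {n : Type} [Fintype n] [DecidableEq n] (v : n) (f : n → ZMod 2) :
    ∑ j, f j = f v + ∑ j : {x : n // x ≠ v}, f j.val := by
  rw [← Finset.add_sum_erase Finset.univ f (Finset.mem_univ v)]
  congr 1
  exact Finset.sum_subtype (p := fun x => x ≠ v) (Finset.univ.erase v) (by simp) f

open Matrix in
lemma nullity_pivot {n : Type} [Fintype n] [DecidableEq n]
    (M : Matrix n n (ZMod 2)) (v : n) (hv : M v v = 1) :
    nullity M = nullity (Matrix.of fun x y : {x : n // x ≠ v} =>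
      M x.val y.val - M x.val v * M v y.val) := by
  classical
  set N : Matrix {x : n // x ≠ v} {x : n // x ≠ v} (ZMod 2) :=
    Matrix.of fun x y : {x : n // x ≠ v} =>
      M x.val y.val - M x.val v * M v y.val with hN
  have kerM : ∀ x, x ∈ LinearMap.ker M.mulVecLin ↔ ∀ i, ∑ j, M i j * x j = 0 := by
    intro x
    simp [LinearMap.mem_ker, Matrix.mulVecLin_apply, funext_iff, Matrix.mulVec,
      dotProduct]
  have kerN : ∀ y, y ∈ LinearMap.ker N.mulVecLin ↔
      ∀ i : {x : n // x ≠ v}, ∑ j : {x : n // x ≠ v},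
        (M i.val j.val - M i.val v * M v j.val) * y j = 0 := by
    intro y
    simp [LinearMap.mem_ker, Matrix.mulVecLin_apply, funext_iff, Matrix.mulVec,
      dotProduct, hN]
  -- extension map
  let ext : ({x : n // x ≠ v} → ZMod 2) →ₗ[ZMod 2] (n → ZMod 2) :=
    { toFun := fun y i => if h : i = v then -∑ j : {x : n // x ≠ v}, M v j.val * y j
        else y ⟨i, h⟩
      map_add' := by
        intro y z; funext i
        by_cases h : i = v
        · simp [h, mul_add, Finset.sum_add_distrib]; ring
        · simp [h]
      map_smul' := by
        intro c y; funext i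
        by_cases h : i = v <;>
          simp [h, Finset.mul_sum, mul_left_comm, smul_eq_mul] }
  let res : (n → ZMod 2) →ₗ[ZMod 2] ({x : n // x ≠ v} → ZMod 2) :=
    LinearMap.funLeft (ZMod 2) (ZMod 2) Subtype.val
  have hres : ∀ x j, res x j = x j.val := fun _ _ => rfl
  have hextv : ∀ y, ext y v = -∑ j : {x : n // x ≠ v}, M v j.val * y j := by
    intro y; simp [ext]
  have hextne : ∀ y (j : {x : n // x ≠ v}), ext y j.val = y j := by
    intro y j; simp [ext, j.prop]
  have h1 : ∀ y ∈ LinearMap.ker N.mulVecLin, ext y ∈ LinearMap.ker M.mulVecLin := by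
    intro y hy
    rw [kerN] at hy
    rw [kerM]
    intro i
    rw [sum_split v, hextv]
    have hrow : ∀ i', ∑ j : {x : n // x ≠ v}, M i' j.val * (ext y) j.val
        = ∑ j : {x : n // x ≠ v}, M i' j.val * y j := by
      intro i'
      exact Finset.sum_congr rfl fun j _ => by rw [hextne]
    rw [hrow]
    by_cases h : i = v
    · subst h
      rw [hv, one_mul]
      ring_nf
    · have := hy ⟨i, h⟩
      have hexp : ∑ j : {x : n // x ≠ v}, (M i j.val - M i v * M v j.val) * y j
          = ∑ j : {x : n // x ≠ v}, M i j.val * y j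
            - M i v * ∑ j : {x : n // x ≠ v}, M v j.val * y j := by
        rw [Finset.mul_sum, ← Finset.sum_sub_distrib]
        exact Finset.sum_congr rfl fun j _ => by ring
      rw [hexp] at this
      have : ∑ j : {x : n // x ≠ v}, M i j.val * y j
          = M i v * ∑ j : {x : n // x ≠ v}, M v j.val * y j := by
        linear_combination this
      rw [this]; ring
  have h2 : ∀ x ∈ LinearMap.ker M.mulVecLin, res x ∈ LinearMap.ker N.mulVecLin := by
    intro x hx
    rw [kerM] at hx
    rw [kerN]
    intro i
    have hi := hx i.val
    have hvrow := hx v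
    rw [sum_split v] at hi hvrow
    rw [hv, one_mul] at hvrow
    have hexp : ∑ j : {x : n // x ≠ v}, (M i.val j.val - M i.val v * M v j.val) * res x j
        = ∑ j : {x : n // x ≠ v}, M i.val j.val * x j.val
          - M i.val v * ∑ j : {x : n // x ≠ v}, M v j.val * x j.val := by
      rw [Finset.mul_sum, ← Finset.sum_sub_distrib]
      exact Finset.sum_congr rfl fun j _ => by rw [hres]; ring
    rw [hexp]
    linear_combination hi - M i.val v * hvrow
  have h3 : ∀ x ∈ LinearMap.ker M.mulVecLin, ext (res x) = x := by
    intro x hx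
    rw [kerM] at hx
    funext i
    by_cases h : i = v
    · rw [h, hextv]
      have hvrow := hx v
      rw [sum_split v, hv, one_mul] at hvrow
      have : ∑ j : {x_1 : n // x_1 ≠ v}, M v j.val * res x j
          = ∑ j : {x_1 : n // x_1 ≠ v}, M v j.val * x j.val :=
        Finset.sum_congr rfl fun j _ => by rw [hres]
      rw [this]
      linear_combination -hvrow
    · exact (hextne (res x) ⟨i, h⟩).trans (hres x ⟨i, h⟩)
  have h4 : ∀ y, res (ext y) = y := by
    intro y; funext j; rw [hres, hextne]
  let fwd : LinearMap.ker N.mulVecLin →ₗ[ZMod 2] LinearMap.ker M.mulVecLin :=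
    LinearMap.codRestrict _ (ext ∘ₗ (LinearMap.ker N.mulVecLin).subtype)
      (fun y => h1 _ y.2)
  let bwd : LinearMap.ker M.mulVecLin →ₗ[ZMod 2] LinearMap.ker N.mulVecLin :=
    LinearMap.codRestrict _ (res ∘ₗ (LinearMap.ker M.mulVecLin).subtype)
      (fun x => h2 _ x.2)
  have e : LinearMap.ker N.mulVecLin ≃ₗ[ZMod 2] LinearMap.ker M.mulVecLin :=
    LinearEquiv.ofLinear fwd bwd
      (by ext x; exact congrFun (h3 x.val x.2) _)
      (by ext y; exact congrFun (h4 y.val) _)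
  rw [nullity_eq_finrank_ker, nullity_eq_finrank_ker]
  exact e.finrank_eq.symm

set_option linter.unusedSectionVars false

section GraphLemmas

open MGraph

variable {V : Type} [DecidableEq V] [Fintype V]

lemma matT_delete (G : MGraph V) (v : V) (T : Finset V) (x y : {x : V // x ≠ v}) :
    (G.delete v).matT (T.subtype (fun a => a ≠ v)) x y = G.matT T x.val y.val := by
  unfold MGraph.matT MGraph.delete
  by_cases h : x = y
  · subst h
    simp [Finset.mem_subtype]
  · rw [Matrix.of_apply, Matrix.of_apply, if_neg h, if_neg (fun hv => h (Subtype.ext hv))]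

lemma keep_delete (G : MGraph V) (v : V) (T : Finset V) (x : {x : V // x ≠ v}) :
    (G.delete v).keep (T.subtype (fun a => a ≠ v)) x = G.keep T x.val := by
  unfold MGraph.keep
  rw [matT_delete]
  rfl

lemma nullity_delete (G : MGraph V) (v : V) (T : Finset V) (hk : G.keep T v = false) :
    nullity (G.subMat T) = nullity ((G.delete v).subMat (T.subtype (fun a => a ≠ v))) := by
  let e : {y : {x : V // x ≠ v} // (G.delete v).keep (T.subtype (fun a => a ≠ v)) y = true}
      ≃ {x : V // G.keep T x = true} :=
    { toFun := fun a => ⟨a.val.val, by rw [← keep_delete]; exact a.2⟩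
      invFun := fun b => ⟨⟨b.val, fun h => by
          have hb := b.2
          rw [h, hk] at hb
          exact absurd hb (by decide)⟩,
        by rw [keep_delete]; exact b.2⟩
      left_inv := fun a => rfl
      right_inv := fun b => rfl }
  have hsub : (G.delete v).subMat (T.subtype (fun a => a ≠ v)) = (G.subMat T).submatrix e e := by
    ext a b
    simp only [MGraph.subMat, Matrix.submatrix_apply]
    exact matT_delete G v T a.val b.val
  rw [hsub, nullity_submatrix]


lemma hasR_flipN (m : Mark) : (MGraph.flipN m).hasR = !m.hasR := by cases m <;> rfl

lemma matT_mlc_delete (G : MGraph V) (v : V) (T : Finset V) (x y : {x : V // x ≠ v}) :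
    ((G.mlc v).delete v).matT (T.subtype (fun a => a ≠ v)) x y
      = G.matT T x.val y.val - G.matT T x.val v * G.matT T v y.val := by
  obtain ⟨x, hx⟩ := x
  obtain ⟨y, hy⟩ := y
  have hxv : G.adj x v = G.adj v x := G.adj_symm x v
  have hvy : (v : V) ≠ y := Ne.symm hy
  by_cases h : x = y
  · subst h
    cases hadj : G.adj v x
    · simp [MGraph.matT, MGraph.delete, MGraph.mlc, Finset.mem_subtype, hx, hadj, hxv]
      congr 1
    · by_cases hm : x ∈ T <;> cases hr : (G.mark x).hasR <;> cases hl : G.loop x <;>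
        simp [MGraph.matT, MGraph.delete, MGraph.mlc, Finset.mem_subtype, hx, hadj, hxv,
          hasR_flipN, hm, hr, hl, hvy] <;> decide
  · have hne : (⟨x, hx⟩ : {x : V // x ≠ v}) ≠ ⟨y, hy⟩ := by
      simp [Subtype.ext_iff, h]
    cases hax : G.adj v x <;> cases hay : G.adj v y <;> cases hxy : G.adj x y <;>
      simp [MGraph.matT, MGraph.delete, MGraph.mlc, hx, hy, hvy, h, hne, hax, hay, hxy, hxv] <;>
      decide

lemma keep_mlc_delete (G : MGraph V) (v : V) (T : Finset V) (x : {x : V // x ≠ v}) :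
    ((G.mlc v).delete v).keep (T.subtype (fun a => a ≠ v)) x = G.keep T x.val := by
  obtain ⟨x, hx⟩ := x
  have hxv : G.adj x v = G.adj v x := G.adj_symm x v
  have e1 : G.matT T x v = if G.adj v x = true then 1 else 0 := by
    unfold MGraph.matT; rw [Matrix.of_apply, if_neg hx, hxv]
  have e2 : G.matT T v x = if G.adj v x = true then 1 else 0 := by
    unfold MGraph.matT; rw [Matrix.of_apply, if_neg (Ne.symm hx)]
  unfold MGraph.keep
  rw [matT_mlc_delete, e1, e2]
  have hmark : ((G.mlc v).delete v).mark ⟨x, hx⟩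
      = if G.adj v x = true then MGraph.flipN (G.mark x) else G.mark x := by
    simp [MGraph.delete, MGraph.mlc, hx]
  rw [hmark]
  cases hadj : G.adj v x
  · simp
  · simp only [if_pos rfl, if_true]
    generalize G.matT T x x = dd
    cases m : G.mark x <;> revert dd <;> decide

lemma nullity_mlc (G : MGraph V) (v : V) (T : Finset V) (hk : G.keep T v = true)
    (hd : G.matT T v v = 1) :
    nullity (G.subMat T)
      = nullity (((G.mlc v).delete v).subMat (T.subtype (fun a => a ≠ v))) := by
  have h1 : G.subMat T ⟨v, hk⟩ ⟨v, hk⟩ = 1 := hd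
  rw [nullity_pivot (G.subMat T) ⟨v, hk⟩ h1]
  let e : {y : {x : V // x ≠ v} //
        ((G.mlc v).delete v).keep (T.subtype (fun a => a ≠ v)) y = true}
      ≃ {a : {x : V // G.keep T x = true} // a ≠ ⟨v, hk⟩} :=
    { toFun := fun b => ⟨⟨b.val.val, by rw [← keep_mlc_delete]; exact b.2⟩,
        fun hh => b.val.prop (congrArg Subtype.val hh)⟩
      invFun := fun a => ⟨⟨a.val.val, fun hh => a.2 (Subtype.ext hh)⟩,
        by rw [keep_mlc_delete]; exact a.val.2⟩
      left_inv := fun _ => rfl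
      right_inv := fun _ => rfl }
  have hsub : ((G.mlc v).delete v).subMat (T.subtype (fun a => a ≠ v))
      = (Matrix.of fun a b : {a : {x : V // G.keep T x = true} // a ≠ ⟨v, hk⟩} =>
          G.subMat T a.val b.val - G.subMat T a.val ⟨v, hk⟩ * G.subMat T ⟨v, hk⟩ b.val
        ).submatrix e e := by
    ext a b
    simp only [MGraph.subMat, Matrix.submatrix_apply, Matrix.of_apply]
    exact matT_mlc_delete G v T a.val b.val
  rw [hsub, nullity_submatrix]

lemma sum_mem_bij {R : Type*} [CommRing R] (v : V) (F : Finset V → R)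
    (F' : Finset {x : V // x ≠ v} → R)
    (h : ∀ T : Finset V, v ∈ T → F T = F' (T.subtype (fun a => a ≠ v))) :
    ∑ T ∈ Finset.univ.filter (fun T : Finset V => v ∈ T), F T
      = ∑ T' : Finset {x : V // x ≠ v}, F' T' := by
  refine Finset.sum_bij' (fun T _ => T.subtype (fun a => a ≠ v))
    (fun T' _ => insert v (T'.map (Function.Embedding.subtype _)))
    (fun T hT => Finset.mem_univ _) (fun T' _ => ?_) (fun T hT => ?_) (fun T' _ => ?_)
    (fun T hT => h T (by simpa using hT))
  · simp [Finset.mem_filter]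
  · rw [Finset.subtype_map, Finset.filter_ne', Finset.insert_erase (by simpa using hT)]
  · ext ⟨a, ha⟩
    simp [Finset.mem_subtype, Finset.mem_insert, ha, Finset.mem_map,
      Function.Embedding.coe_subtype]
lemma sum_not_mem_bij {R : Type*} [CommRing R] (v : V) (F : Finset V → R)
    (F' : Finset {x : V // x ≠ v} → R)
    (h : ∀ T : Finset V, v ∉ T → F T = F' (T.subtype (fun a => a ≠ v))) :
    ∑ T ∈ Finset.univ.filter (fun T : Finset V => v ∉ T), F T
      = ∑ T' : Finset {x : V // x ≠ v}, F' T' := by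
  refine Finset.sum_bij' (fun T _ => T.subtype (fun a => a ≠ v))
    (fun T' _ => T'.map (Function.Embedding.subtype _))
    (fun T hT => Finset.mem_univ _) (fun T' _ => ?_) (fun T hT => ?_) (fun T' _ => ?_)
    (fun T hT => h T (by simpa using hT))
  · simp [Finset.mem_filter, Finset.mem_map]
  · rw [Finset.subtype_map, Finset.filter_ne',
      Finset.erase_eq_of_notMem (by simpa using hT)]
  · ext ⟨a, ha⟩
    simp [Finset.mem_subtype, Finset.mem_map, Function.Embedding.coe_subtype]
    exact ⟨fun ⟨_, hh⟩ => hh, fun hh => ⟨ha, hh⟩⟩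

lemma card_ne (v : V) : Fintype.card {x : V // x ≠ v} = Fintype.card V - 1 := by
  rw [Fintype.card_subtype, Finset.filter_ne', Finset.card_erase_of_mem (Finset.mem_univ v),
    Finset.card_univ]

lemma sum_mem_eq {R : Type*} [CommRing R] (G : MGraph V) (v : V) (A B d : R)
    (H : MGraph {x : V // x ≠ v})
    (hnull : ∀ T : Finset V, v ∈ T →
      nullity (G.subMat T) = nullity (H.subMat (T.subtype (fun a => a ≠ v)))) :
    ∑ T ∈ Finset.univ.filter (fun T : Finset V => v ∈ T),
      A ^ (Fintype.card V - T.card) * B ^ T.card * d ^ nullity (G.subMat T)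
    = B * ∑ T' : Finset {x : V // x ≠ v},
        A ^ (Fintype.card {x : V // x ≠ v} - T'.card) * B ^ T'.card
          * d ^ nullity (H.subMat T') := by
  rw [Finset.mul_sum]
  refine sum_mem_bij v _ _ (fun T hT => ?_)
  have hc : (T.subtype (fun a => a ≠ v)).card = T.card - 1 := by
    rw [Finset.card_subtype, Finset.filter_ne', Finset.card_erase_of_mem hT]
  have h1 : 1 ≤ T.card := Finset.card_pos.mpr ⟨v, hT⟩
  have h2 : T.card ≤ Fintype.card V := by
    simpa [Finset.card_univ] using Finset.card_le_card (Finset.subset_univ T)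
  rw [hnull T hT, hc, card_ne v,
    show Fintype.card V - 1 - (T.card - 1) = Fintype.card V - T.card by omega,
    show B ^ T.card = B * B ^ (T.card - 1) by
      conv_lhs => rw [show T.card = (T.card - 1) + 1 by omega]
      rw [pow_succ]; ring]
  ring

lemma sum_not_mem_eq {R : Type*} [CommRing R] (G : MGraph V) (v : V) (A B d : R)
    (H : MGraph {x : V // x ≠ v})
    (hnull : ∀ T : Finset V, v ∉ T →
      nullity (G.subMat T) = nullity (H.subMat (T.subtype (fun a => a ≠ v)))) :
    ∑ T ∈ Finset.univ.filter (fun T : Finset V => v ∉ T),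
      A ^ (Fintype.card V - T.card) * B ^ T.card * d ^ nullity (G.subMat T)
    = A * ∑ T' : Finset {x : V // x ≠ v},
        A ^ (Fintype.card {x : V // x ≠ v} - T'.card) * B ^ T'.card
          * d ^ nullity (H.subMat T') := by
  rw [Finset.mul_sum]
  refine sum_not_mem_bij v _ _ (fun T hT => ?_)
  have hc : (T.subtype (fun a => a ≠ v)).card = T.card := by
    rw [Finset.card_subtype, Finset.filter_ne', Finset.erase_eq_of_notMem hT]
  have hsub : T ⊆ Finset.univ.erase v := fun x hx =>
    Finset.mem_erase.mpr ⟨fun hxv => hT (hxv ▸ hx), Finset.mem_univ x⟩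
  have h2 : T.card ≤ Fintype.card V - 1 := by
    simpa [Finset.card_erase_of_mem (Finset.mem_univ v), Finset.card_univ] using
      Finset.card_le_card hsub
  have h1 : 1 ≤ Fintype.card V := Fintype.card_pos_iff.mpr ⟨v⟩
  rw [hnull T hT, hc, card_ne v,
    show A ^ (Fintype.card V - T.card)
        = A * A ^ (Fintype.card V - 1 - T.card) by
      conv_lhs => rw [show Fintype.card V - T.card
        = (Fintype.card V - 1 - T.card) + 1 by omega]
      rw [pow_succ]; ring]
  ring

lemma key_mem {R : Type*} [CommRing R] (G : MGraph V) (v : V) (A B d : R)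
    (hC : (G.mark v).isC = true)
    (hd : ∀ T : Finset V, G.matT T v v = if v ∈ T then 1 else 0) :
    G.bracket A B d = A * (G.delete v).bracket A B d
      + B * ((G.mlc v).delete v).bracket A B d := by
  have hU : (G.mark v).isU = false := by
    cases hm : G.mark v <;> simp_all [Mark.isC, Mark.isU]
  have hkeepf : ∀ T : Finset V, v ∉ T → G.keep T v = false := by
    intro T hT
    unfold MGraph.keep
    rw [hd T, if_neg hT, hC, hU]
    simp
  have hkeept : ∀ T : Finset V, v ∈ T → G.keep T v = true := by
    intro T hT
    unfold MGraph.keep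
    rw [hd T, if_pos hT, hC, hU]
    simp
  unfold MGraph.bracket
  have hfl1 : (G.delete v).freeLoops = G.freeLoops := rfl
  have hfl2 : ((G.mlc v).delete v).freeLoops = G.freeLoops := rfl
  rw [hfl1, hfl2,
    ← Finset.sum_filter_add_sum_filter_not Finset.univ (fun T : Finset V => v ∈ T),
    sum_mem_eq G v A B d ((G.mlc v).delete v)
      (fun T hT => nullity_mlc G v T (hkeept T hT) (by rw [hd T, if_pos hT])),
    sum_not_mem_eq G v A B d (G.delete v)
      (fun T hT => nullity_delete G v T (hkeepf T hT))]
  ring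

lemma key_notmem {R : Type*} [CommRing R] (G : MGraph V) (v : V) (A B d : R)
    (hC : (G.mark v).isC = true)
    (hd : ∀ T : Finset V, G.matT T v v = if v ∈ T then 0 else 1) :
    G.bracket A B d = B * (G.delete v).bracket A B d
      + A * ((G.mlc v).delete v).bracket A B d := by
  have hU : (G.mark v).isU = false := by
    cases hm : G.mark v <;> simp_all [Mark.isC, Mark.isU]
  have hkeepf : ∀ T : Finset V, v ∈ T → G.keep T v = false := by
    intro T hT
    unfold MGraph.keep
    rw [hd T, if_pos hT, hC, hU]
    simp
  have hkeept : ∀ T : Finset V, v ∉ T → G.keep T v = true := by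
    intro T hT
    unfold MGraph.keep
    rw [hd T, if_neg hT, hC, hU]
    simp
  unfold MGraph.bracket
  have hfl1 : (G.delete v).freeLoops = G.freeLoops := rfl
  have hfl2 : ((G.mlc v).delete v).freeLoops = G.freeLoops := rfl
  rw [hfl1, hfl2,
    ← Finset.sum_filter_add_sum_filter_not Finset.univ (fun T : Finset V => v ∈ T),
    sum_mem_eq G v A B d (G.delete v)
      (fun T hT => nullity_delete G v T (hkeepf T hT)),
    sum_not_mem_eq G v A B d ((G.mlc v).delete v)
      (fun T hT => nullity_mlc G v T (hkeept T hT) (by rw [hd T, if_neg hT]))]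
  ring

end GraphLemmas


/-- if `v` is unlooped and marked `c`, or looped and marked
`cr`, then `[G] = A[G − v] + B[G_cru^v − v]`; if instead `v` is looped
and marked `c`, or unlooped and marked `cr`, then
`[G] = B[G − v] + A[G_cru^v − v]`. -/
theorem bracket_c_recursion {V : Type} [DecidableEq V] [Fintype V]
    (G : MGraph V) (v : V) {R : Type*} [CommRing R] (A B d : R) :
    (((G.loop v = false ∧ G.mark v = Mark.c) ∨ (G.loop v = true ∧ G.mark v = Mark.cr)) →
      G.bracket A B d =
        A * (G.delete v).bracket A B d + B * ((G.mlc v).delete v).bracket A B d) ∧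
    (((G.loop v = true ∧ G.mark v = Mark.c) ∨ (G.loop v = false ∧ G.mark v = Mark.cr)) →
      G.bracket A B d =
        B * (G.delete v).bracket A B d + A * ((G.mlc v).delete v).bracket A B d) := by
  constructor
  · rintro (⟨hl, hm⟩ | ⟨hl, hm⟩)
    · exact key_mem G v A B d (by rw [hm]; rfl) (fun T => by
        by_cases hT : v ∈ T <;>
          simp [MGraph.matT, hl, hm, Mark.hasR, hT] <;> decide)
    · exact key_mem G v A B d (by rw [hm]; rfl) (fun T => by
        by_cases hT : v ∈ T <;>
          simp [MGraph.matT, hl, hm, Mark.hasR, hT] <;> decide)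
  · rintro (⟨hl, hm⟩ | ⟨hl, hm⟩)
    · exact key_notmem G v A B d (by rw [hm]; rfl) (fun T => by
        by_cases hT : v ∈ T <;>
          simp [MGraph.matT, hl, hm, Mark.hasR, hT] <;> decide)
    · exact key_notmem G v A B d (by rw [hm]; rfl) (fun T => by
        by_cases hT : v ∈ T <;>
          simp [MGraph.matT, hl, hm, Mark.hasR, hT] <;> decide)
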